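/- Fix n ≥ 1 and suppose constₙ is a constant such that the Cauchy-estimate Lipschitz bound holds: for every nonempty open V ⊆ ℂⁿ, d > 0, bounded holomorphic F : V → ℂⁿ, and x, y ∈ V with the d-neighborhood of the segment [x,y] contained in V, ‖F(y) − F(x)‖ ≤ constₙ·(‖F‖_V/d)·‖y − x‖. Then: if V is a nonempty open subset of ℂⁿ, 0 < ε < δ/4, and α, β, γ : V(δ) → ℂⁿ are injective holomorphic maps each within distance ε of the identity in sup norm on V(δ), then the composition γ̃ := β⁻¹ ∘ γ ∘ α is well defined on V and, writing α = Id + a, β = Id + b, γ = Id + c, γ̃ = Id + c̃, one has ‖c̃ − (c + a − b)‖_V ≤ M₂·ε²/δ for a constant M₂ ≥ 1 depending only on n. -/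

import Mathlib

open Set Metric

/-- The open `r`-neighborhood of a set `M ⊆ ℂⁿ`. -/
def nbhd {n : ℕ} (M : Set (EuclideanSpace ℂ (Fin n))) (r : ℝ) :
    Set (EuclideanSpace ℂ (Fin n)) :=
  {z | ∃ x ∈ M, ‖x - z‖ < r}

section Helpers

variable {E : Type*} [NormedAddCommGroup E] [NormedSpace ℂ E]

/-- Sharp Cauchy estimate: a bounded holomorphic function has derivative norm at most
`s / r` at a point whose `r`-ball lies in the domain. -/
theorem fderiv_norm_le_of_ball {f : E → E} {Ω : Set E} (hΩ : IsOpen Ω)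
    (hf : DifferentiableOn ℂ f Ω) {s : ℝ} (hs : ∀ w ∈ Ω, ‖f w‖ ≤ s)
    {x : E} {r : ℝ} (hr : 0 < r) (hball : ball x r ⊆ Ω) :
    ‖fderiv ℂ f x‖ ≤ s / r := by
  have hx : x ∈ Ω := hball (mem_ball_self hr)
  have hs0 : 0 ≤ s := (norm_nonneg _).trans (hs x hx)
  have hfx : DifferentiableAt ℂ f x := hf.differentiableAt (hΩ.mem_nhds hx)
  set D := fderiv ℂ f x with hDdef
  refine ContinuousLinearMap.opNorm_le_bound _ (div_nonneg hs0 hr.le) fun u => ?_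
  rcases eq_or_ne u 0 with rfl | hu
  · simp
  have hu0 : 0 < ‖u‖ := norm_pos_iff.2 hu
  set R₁ := r / ‖u‖ with hR₁def
  have hR₁ : 0 < R₁ := div_pos hr hu0
  have hline : ∀ t : ℂ, t ∈ ball (0 : ℂ) R₁ → x + t • u ∈ Ω := by
    intro t ht
    apply hball
    rw [mem_ball_zero_iff] at ht
    rw [mem_ball_iff_norm]
    have : ‖x + t • u - x‖ = ‖t‖ * ‖u‖ := by rw [add_sub_cancel_left, norm_smul]
    rw [this]
    calc ‖t‖ * ‖u‖ < R₁ * ‖u‖ := by gcongr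
      _ = r := by rw [hR₁def, div_mul_cancel₀ r hu0.ne']
  set φ : ℂ → E := fun t => f (x + t • u) with hφdef
  have hφdAt : ∀ t : ℂ, t ∈ ball (0 : ℂ) R₁ → DifferentiableAt ℂ φ t := by
    intro t ht
    have h1 : DifferentiableAt ℂ f (x + t • u) := hf.differentiableAt (hΩ.mem_nhds (hline t ht))
    exact h1.comp t ((differentiableAt_id.smul_const u).const_add x)
  have hneg : ∀ t : ℂ, t ∈ ball (0 : ℂ) R₁ → -t ∈ ball (0 : ℂ) R₁ := by
    intro t ht
    rw [mem_ball_zero_iff] at ht ⊢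
    simpa using ht
  set ψ : ℂ → E := fun t => (2 : ℂ)⁻¹ • (φ t - φ (-t)) with hψdef
  have hψ0 : ψ 0 = 0 := by simp [hψdef]
  have hψd : DifferentiableOn ℂ ψ (ball (0 : ℂ) R₁) := by
    intro t ht
    have h2 : DifferentiableAt ℂ (fun t : ℂ => φ (-t)) t :=
      (hφdAt _ (hneg t ht)).comp t differentiableAt_id.neg
    exact (((hφdAt t ht).sub h2).const_smul _).differentiableWithinAt
  have hf' : HasFDerivAt f D (x + (0 : ℂ) • u) := by
    rw [show x + (0 : ℂ) • u = x by simp]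
    exact hfx.hasFDerivAt
  have hl : HasDerivAt (fun t : ℂ => x + t • u) u 0 := by
    simpa using ((hasDerivAt_id (0 : ℂ)).smul_const u).const_add x
  have hφ' : HasDerivAt φ (D u) 0 := hf'.comp_hasDerivAt 0 hl
  have hφn : HasDerivAt (fun t : ℂ => φ (-t)) (-(D u)) 0 := by
    have h0 : HasDerivAt φ (D u) (-(0 : ℂ)) := by rw [neg_zero]; exact hφ'
    have hn : HasDerivAt (fun t : ℂ => -t) (-1 : ℂ) 0 := (hasDerivAt_id (0 : ℂ)).neg
    have := h0.scomp (0 : ℂ) hn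
    rw [neg_one_smul] at this; exact this
  have hψ' : HasDerivAt ψ (D u) 0 := by
    have h1 : HasDerivAt ψ ((2 : ℂ)⁻¹ • (D u - -(D u))) 0 := (hφ'.sub hφn).const_smul (2 : ℂ)⁻¹
    have h2 : (2 : ℂ)⁻¹ • (D u - -(D u)) = D u := by
      rw [sub_neg_eq_add, ← two_smul ℂ, smul_smul, inv_mul_cancel₀ two_ne_zero, one_smul]
    rwa [h2] at h1
  have hkey : ∀ η : ℝ, 0 < η → ‖D u‖ ≤ (s + η) / R₁ := by
    intro η hη
    have hm : MapsTo ψ (ball (0 : ℂ) R₁) (ball (ψ 0) (s + η)) := by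
      intro t ht
      rw [hψ0, mem_ball_zero_iff]
      have b1 : ‖φ t‖ ≤ s := hs _ (hline t ht)
      have b2 : ‖φ (-t)‖ ≤ s := hs _ (hline (-t) (hneg t ht))
      have h2 : ‖(2 : ℂ)⁻¹‖ = 2⁻¹ := by rw [norm_inv]; norm_num
      calc ‖ψ t‖ = ‖(2 : ℂ)⁻¹‖ * ‖φ t - φ (-t)‖ := norm_smul _ _
        _ ≤ 2⁻¹ * (‖φ t‖ + ‖φ (-t)‖) := by rw [h2]; gcongr; exact norm_sub_le _ _
        _ ≤ 2⁻¹ * (s + s) := by gcongr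
        _ < s + η := by linarith
    have := Complex.norm_deriv_le_div_of_mapsTo_ball hψd (hm.mono_right ball_subset_closedBall) hR₁
    rwa [hψ'.deriv] at this
  refine le_of_forall_pos_le_add fun η hη => ?_
  have h2 := hkey (η * r / ‖u‖) (by positivity)
  have h3 : (s + η * r / ‖u‖) / R₁ = s / r * ‖u‖ + η := by
    rw [hR₁def]; field_simp
  linarith [h2, h3 ▸ h2]

/-- Mean value estimate from the sharp Cauchy bound. -/
theorem norm_sub_le_of_ball [NormedSpace ℝ E] {f : E → E} {Ω : Set E} (hΩ : IsOpen Ω)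
    (hf : DifferentiableOn ℂ f Ω) {s : ℝ} (hs : ∀ w ∈ Ω, ‖f w‖ ≤ s)
    {U : Set E} (hU : Convex ℝ U) {d : ℝ} (hd : 0 < d)
    (hUd : ∀ x ∈ U, ball x d ⊆ Ω) {x y : E} (hx : x ∈ U) (hy : y ∈ U) :
    ‖f y - f x‖ ≤ s / d * ‖y - x‖ :=
  hU.norm_image_sub_le_of_norm_fderiv_le
    (fun w hw => hf.differentiableAt (hΩ.mem_nhds (hUd w hw (mem_ball_self hd))))
    (fun w hw => fderiv_norm_le_of_ball hΩ hf hs hd (hUd w hw)) hx hy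

end Helpers

set_option maxHeartbeats 2000000 in
/-- Near-identity composition lemma: given the Cauchy-estimate Lipschitz bound with
constant `constₙ`, there is `M₂ ≥ 1` (depending only on `n`) such that for injective
holomorphic `α, β, γ` on `V(δ)` within `ε < δ/4` of the identity, the composition
`γ̃ = β⁻¹ ∘ γ ∘ α` is well defined on `V` and, writing `α = Id + a`, `β = Id + b`,
`γ = Id + c`, `γ̃ = Id + c̃`, one has `‖c̃ - (c + a - b)‖_V ≤ M₂ ε²/δ`. -/
theorem near_identity_composition (n : ℕ) (hn : 1 ≤ n) (constn : ℝ) (hconst : 0 < constn)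
    (hCauchy : ∀ (V : Set (EuclideanSpace ℂ (Fin n))) (d : ℝ)
      (F : EuclideanSpace ℂ (Fin n) → EuclideanSpace ℂ (Fin n))
      (x y : EuclideanSpace ℂ (Fin n)),
      V.Nonempty → IsOpen V → 0 < d → x ∈ V → y ∈ V →
      DifferentiableOn ℂ F V → BddAbove ((fun z => ‖F z‖) '' V) →
      nbhd (segment ℝ x y) d ⊆ V →
      ‖F y - F x‖ ≤ constn * (sSup ((fun z => ‖F z‖) '' V) / d) * ‖y - x‖) :
    ∃ M₂ : ℝ, 1 ≤ M₂ ∧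
      ∀ (V : Set (EuclideanSpace ℂ (Fin n))) (ε δ : ℝ)
        (α β γ : EuclideanSpace ℂ (Fin n) → EuclideanSpace ℂ (Fin n)),
        V.Nonempty → IsOpen V → 0 < ε → ε < δ / 4 →
        Set.InjOn α (nbhd V δ) → DifferentiableOn ℂ α (nbhd V δ) →
        Set.InjOn β (nbhd V δ) → DifferentiableOn ℂ β (nbhd V δ) →
        Set.InjOn γ (nbhd V δ) → DifferentiableOn ℂ γ (nbhd V δ) →
        (∀ z ∈ nbhd V δ, ‖α z - z‖ < ε) →
        (∀ z ∈ nbhd V δ, ‖β z - z‖ < ε) →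
        (∀ z ∈ nbhd V δ, ‖γ z - z‖ < ε) →
        ∃ γt : EuclideanSpace ℂ (Fin n) → EuclideanSpace ℂ (Fin n),
          (∀ z ∈ V, α z ∈ nbhd V δ ∧ γt z ∈ nbhd V δ ∧ β (γt z) = γ (α z)) ∧
          Set.InjOn γt V ∧ DifferentiableOn ℂ γt V ∧
          ∀ z ∈ V, ‖(γt z - z) - ((γ z - z) + (α z - z) - (β z - z))‖ ≤ M₂ * ε ^ 2 / δ := by
  classical
  refine ⟨14, by norm_num, ?_⟩
  intro V ε δ α β γ hV hVo hε hεδ hαi hαd hβi hβd hγi hγd hαe hβe hγe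
  have hδ : 0 < δ := by linarith
  have hδ4 : 4 * ε < δ := by linarith
  set Ω : Set (EuclideanSpace ℂ (Fin n)) := nbhd V δ with hΩdef
  have hmemΩ : ∀ {z w : EuclideanSpace ℂ (Fin n)}, z ∈ V → ‖z - w‖ < δ → w ∈ Ω :=
    fun {z w} hz h => ⟨z, hz, h⟩
  have hΩo : IsOpen Ω := by
    have hΩeq : Ω = ⋃ x ∈ V, ball x δ := by
      ext w
      simp only [hΩdef, nbhd, mem_setOf_eq, mem_iUnion, mem_ball, dist_eq_norm, exists_prop]
      constructor
      · rintro ⟨x, hx, h⟩; exact ⟨x, hx, by rwa [norm_sub_rev] at h⟩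
      · rintro ⟨x, hx, h⟩; exact ⟨x, hx, by rwa [norm_sub_rev]⟩
    rw [hΩeq]; exact isOpen_biUnion fun _ _ => isOpen_ball
  set b : EuclideanSpace ℂ (Fin n) → EuclideanSpace ℂ (Fin n) := fun u => β u - u with hbdef
  set c : EuclideanSpace ℂ (Fin n) → EuclideanSpace ℂ (Fin n) := fun u => γ u - u with hcdef
  have hbd : DifferentiableOn ℂ b Ω := hβd.sub differentiableOn_id
  have hcd : DifferentiableOn ℂ c Ω := hγd.sub differentiableOn_id
  have hbs : ∀ w ∈ Ω, ‖b w‖ ≤ ε := fun w hw => (hβe w hw).le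
  have hcs : ∀ w ∈ Ω, ‖c w‖ ≤ ε := fun w hw => (hγe w hw).le
  set dd : ℝ := (δ - 2 * ε) / 2 with hdddef
  have hdd : 0 < dd := by rw [hdddef]; linarith
  set k : ℝ := ε / dd with hkdef
  have hk0 : 0 ≤ k := by positivity
  have hk1 : k < 1 := by rw [hkdef, div_lt_one hdd, hdddef]; linarith
  -- Lipschitz bound for `b` on suitable convex sets
  have hblip : ∀ (z : EuclideanSpace ℂ (Fin n)) (U : Set (EuclideanSpace ℂ (Fin n))),
      z ∈ V → Convex ℝ U → (∀ x ∈ U, ‖z - x‖ < δ - dd) →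
      ∀ x ∈ U, ∀ y ∈ U, ‖b y - b x‖ ≤ k * ‖y - x‖ := by
    intro z U hz hU hclose x hx y hy
    have h := norm_sub_le_of_ball hΩo hbd hbs hU hdd ?_ hx hy
    · rwa [hkdef]
    · intro x' hx' w hw
      rw [mem_ball, dist_eq_norm] at hw
      rw [norm_sub_rev] at hw
      refine hmemΩ hz ?_
      have h1 := hclose x' hx'
      calc ‖z - w‖ = ‖(z - x') + (x' - w)‖ := by rw [sub_add_sub_cancel]
        _ ≤ ‖z - x'‖ + ‖x' - w‖ := norm_add_le _ _
        _ < (δ - dd) + dd := by linarith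
        _ = δ := by ring
  -- Existence of preimages under β near V
  have hEx : ∀ w : EuclideanSpace ℂ (Fin n),
      (∃ z ∈ V, ‖z - w‖ < 2 * ε + (δ - 4 * ε) / 4) →
      ∃ u, ‖w - u‖ ≤ ε ∧ u ∈ Ω ∧ β u = w := by
    rintro w ⟨z, hz, hzw⟩
    set T : EuclideanSpace ℂ (Fin n) → EuclideanSpace ℂ (Fin n) := fun u => w - b u with hTdef
    have hsub : ∀ u ∈ closedBall w ε, u ∈ Ω := by
      intro u hu
      rw [mem_closedBall, dist_eq_norm] at hu
      refine hmemΩ hz ?_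
      have h1 : ‖w - u‖ ≤ ε := by rwa [norm_sub_rev]
      calc ‖z - u‖ = ‖(z - w) + (w - u)‖ := by rw [sub_add_sub_cancel]
        _ ≤ ‖z - w‖ + ‖w - u‖ := norm_add_le _ _
        _ < δ := by linarith
    have hmapsTo : MapsTo T (closedBall w ε) (closedBall w ε) := by
      intro u hu
      rw [mem_closedBall, dist_eq_norm]
      have h1 : T u - w = -(b u) := by show w - b u - w = -(b u); abel
      rw [h1, norm_neg]
      exact hbs u (hsub u hu)
    have hlipT : LipschitzOnWith k.toNNReal T (closedBall w ε) := by
      apply LipschitzOnWith.of_dist_le_mul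
      intro u hu v hv
      rw [dist_eq_norm, dist_eq_norm]
      have h1 : T u - T v = b v - b u := by show (w - b u) - (w - b v) = b v - b u; abel
      rw [h1, Real.coe_toNNReal k hk0]
      have h2 := hblip z (closedBall w ε) hz (convex_closedBall _ _) ?_ u hu v hv
      · rwa [norm_sub_rev v u] at h2
      · intro x hx
        rw [mem_closedBall, dist_eq_norm] at hx
        have h3 : ‖z - x‖ ≤ ‖z - w‖ + ‖x - w‖ := by
          calc ‖z - x‖ = ‖(z - w) + (w - x)‖ := by rw [sub_add_sub_cancel]
            _ ≤ ‖z - w‖ + ‖w - x‖ := norm_add_le _ _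
            _ = ‖z - w‖ + ‖x - w‖ := by rw [norm_sub_rev w x]
        rw [hdddef]
        linarith
    have hK1 : k.toNNReal < 1 := by
      rw [show (1 : NNReal) = Real.toNNReal 1 by simp]
      exact (Real.toNNReal_lt_toNNReal_iff (by norm_num)).2 hk1
    have hcw : ContractingWith k.toNNReal (hmapsTo.restrict T _ _) :=
      ⟨hK1, fun x y => hlipT x.2 y.2⟩
    obtain ⟨y, hys, hfy, -, -⟩ :=
      ContractingWith.exists_fixedPoint' Metric.isClosed_closedBall.isComplete hmapsTo hcw
        (mem_closedBall_self hε.le) (edist_ne_top _ _)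
    refine ⟨y, ?_, hsub y hys, ?_⟩
    · rw [mem_closedBall, dist_eq_norm] at hys
      rwa [norm_sub_rev]
    · have h2 : w - (β y - y) = y := hfy
      have h3 : w - β y = 0 := by
        have h4 : w - (β y - y) - y = 0 := sub_eq_zero.mpr h2
        calc w - β y = w - (β y - y) - y := by abel
          _ = 0 := h4
      exact (sub_eq_zero.mp h3).symm
  -- the inverse function
  have hGchoice : ∀ w : EuclideanSpace ℂ (Fin n), ∃ v,
      (∃ u, u ∈ Ω ∧ β u = w) → v ∈ Ω ∧ β v = w := by
    intro w
    by_cases h : ∃ u, u ∈ Ω ∧ β u = w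
    · exact ⟨h.choose, fun _ => h.choose_spec⟩
    · exact ⟨w, fun hc => absurd hc h⟩
  choose Ginv hGspec using hGchoice
  have hGeq : ∀ w u, u ∈ Ω → β u = w → Ginv w = u := by
    intro w u hu hbu
    obtain ⟨h1, h2⟩ := hGspec w ⟨u, hu, hbu⟩
    exact hβi h1 hu (h2.trans hbu.symm)
  have hzΩ : ∀ z ∈ V, z ∈ Ω := fun z hz => hmemΩ hz (by simpa using hδ)
  have hαΩ : ∀ z ∈ V, α z ∈ Ω := by
    intro z hz
    refine hmemΩ hz ?_
    rw [norm_sub_rev]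
    exact lt_trans (hαe z (hzΩ z hz)) (by linarith)
  have hw0 : ∀ z ∈ V, ‖z - γ (α z)‖ < 2 * ε := by
    intro z hz
    have h1 : ‖α z - z‖ < ε := hαe z (hzΩ z hz)
    have h2 : ‖γ (α z) - α z‖ < ε := hγe (α z) (hαΩ z hz)
    rw [norm_sub_rev] at h1 h2
    calc ‖z - γ (α z)‖ = ‖(z - α z) + (α z - γ (α z))‖ := by rw [sub_add_sub_cancel]
      _ ≤ ‖z - α z‖ + ‖α z - γ (α z)‖ := norm_add_le _ _
      _ < 2 * ε := by linarith
  have hr₀ : 0 < (δ - 4 * ε) / 4 := by linarith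
  have hkey : ∀ z ∈ V, Ginv (γ (α z)) ∈ Ω ∧ β (Ginv (γ (α z))) = γ (α z) ∧
      ‖γ (α z) - Ginv (γ (α z))‖ ≤ ε := by
    intro z hz
    obtain ⟨u, hu1, hu2, hu3⟩ := hEx (γ (α z)) ⟨z, hz, by have := hw0 z hz; linarith⟩
    rw [hGeq _ u hu2 hu3]
    exact ⟨hu2, hu3, hu1⟩
  have hdist3 : ∀ z ∈ V, ‖z - Ginv (γ (α z))‖ < 3 * ε := by
    intro z hz
    have h1 := hw0 z hz
    have h2 := (hkey z hz).2.2
    calc ‖z - Ginv (γ (α z))‖ = ‖(z - γ (α z)) + (γ (α z) - Ginv (γ (α z)))‖ := by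
          rw [sub_add_sub_cancel]
      _ ≤ ‖z - γ (α z)‖ + ‖γ (α z) - Ginv (γ (α z))‖ := norm_add_le _ _
      _ < 3 * ε := by linarith
  refine ⟨fun z => Ginv (γ (α z)),
    fun z hz => ⟨hαΩ z hz, (hkey z hz).1, (hkey z hz).2.1⟩, ?_, ?_, ?_⟩
  · -- injectivity
    intro z hz z' hz' he
    have he' : Ginv (γ (α z)) = Ginv (γ (α z')) := he
    have h1 : γ (α z) = γ (α z') := by
      rw [← (hkey z hz).2.1, ← (hkey z' hz').2.1, he']
    have h2 : α z = α z' := hγi (hαΩ z hz) (hαΩ z' hz') h1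
    exact hαi (hzΩ z hz) (hzΩ z' hz') h2
  · -- differentiability
    intro z hz
    set w₀ := γ (α z) with hw₀def
    have hu₀Ω : Ginv w₀ ∈ Ω := (hkey z hz).1
    have hβu₀ : β (Ginv w₀) = w₀ := (hkey z hz).2.1
    have hBd : DifferentiableAt ℂ b (Ginv w₀) := hbd.differentiableAt (hΩo.mem_nhds hu₀Ω)
    set B := fderiv ℂ b (Ginv w₀) with hBdef
    have hzu₀ : ‖z - Ginv w₀‖ < 3 * ε := hdist3 z hz
    have hBle : ‖B‖ ≤ k := by
      rw [hkdef]
      refine fderiv_norm_le_of_ball hΩo hbd hbs hdd ?_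
      intro w hw
      rw [mem_ball, dist_eq_norm] at hw
      rw [norm_sub_rev] at hw
      refine hmemΩ hz ?_
      calc ‖z - w‖ = ‖(z - Ginv w₀) + (Ginv w₀ - w)‖ := by rw [sub_add_sub_cancel]
        _ ≤ ‖z - Ginv w₀‖ + ‖Ginv w₀ - w‖ := norm_add_le _ _
        _ < 3 * ε + dd := by linarith
        _ ≤ δ := by rw [hdddef]; linarith
    have hBlt1 : ‖B‖ < 1 := lt_of_le_of_lt hBle hk1
    set e : EuclideanSpace ℂ (Fin n) ≃L[ℂ] EuclideanSpace ℂ (Fin n) :=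
      ContinuousLinearEquiv.unitsEquiv ℂ _ (Units.oneSub (-B) (by rwa [norm_neg])) with hedef
    have hecoe : (e : EuclideanSpace ℂ (Fin n) →L[ℂ] EuclideanSpace ℂ (Fin n))
        = ContinuousLinearMap.id ℂ _ + B := by
      refine ContinuousLinearMap.ext fun x => ?_
      show (1 - (-B) : EuclideanSpace ℂ (Fin n) →L[ℂ] EuclideanSpace ℂ (Fin n)) x = _
      simp [sub_neg_eq_add]
    have hβfd : HasFDerivAt β
        (e : EuclideanSpace ℂ (Fin n) →L[ℂ] EuclideanSpace ℂ (Fin n)) (Ginv w₀) := by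
      rw [hecoe]
      have h1 : HasFDerivAt (fun u => u + b u) (ContinuousLinearMap.id ℂ _ + B) (Ginv w₀) :=
        (hasFDerivAt_id _).add hBd.hasFDerivAt
      have h2 : (fun u : EuclideanSpace ℂ (Fin n) => u + b u) = β := by
        funext u
        show u + (β u - u) = β u
        abel
      rwa [h2] at h1
    have hGnear : ∀ w, dist w w₀ < (δ - 4 * ε) / 4 →
        Ginv w ∈ Ω ∧ β (Ginv w) = w ∧ ‖w - Ginv w‖ ≤ ε := by
      intro w hw
      rw [dist_eq_norm] at hw
      have hc1 : ‖z - w‖ < 2 * ε + (δ - 4 * ε) / 4 := by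
        have h1 := hw0 z hz
        calc ‖z - w‖ = ‖(z - w₀) + (w₀ - w)‖ := by rw [sub_add_sub_cancel]
          _ ≤ ‖z - w₀‖ + ‖w₀ - w‖ := norm_add_le _ _
          _ = ‖z - w₀‖ + ‖w - w₀‖ := by rw [norm_sub_rev w₀ w]
          _ < 2 * ε + (δ - 4 * ε) / 4 := by linarith
      obtain ⟨u, hu1, hu2, hu3⟩ := hEx w ⟨z, hz, hc1⟩
      rw [hGeq w u hu2 hu3]
      exact ⟨hu2, hu3, hu1⟩
    have hUreg : ∀ x ∈ closedBall w₀ (ε + (δ - 4 * ε) / 4), ‖z - x‖ < δ - dd := by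
      intro x hx
      rw [mem_closedBall, dist_eq_norm] at hx
      have h1 := hw0 z hz
      have h2 : ‖z - x‖ ≤ ‖z - w₀‖ + ‖x - w₀‖ := by
        calc ‖z - x‖ = ‖(z - w₀) + (w₀ - x)‖ := by rw [sub_add_sub_cancel]
          _ ≤ ‖z - w₀‖ + ‖w₀ - x‖ := norm_add_le _ _
          _ = ‖z - w₀‖ + ‖x - w₀‖ := by rw [norm_sub_rev w₀ x]
      rw [hdddef]
      linarith
    have hGcont : ContinuousAt Ginv w₀ := by
      refine continuousAt_of_locally_lipschitz hr₀ (1 - k)⁻¹ ?_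
      intro w hw
      obtain ⟨hw1, hw2, hw3⟩ := hGnear w hw
      rw [dist_eq_norm] at hw
      have hmem1 : Ginv w ∈ closedBall w₀ (ε + (δ - 4 * ε) / 4) := by
        rw [mem_closedBall, dist_eq_norm]
        have h4 : ‖Ginv w - w‖ ≤ ε := by rwa [norm_sub_rev] at hw3
        calc ‖Ginv w - w₀‖ = ‖(Ginv w - w) + (w - w₀)‖ := by rw [sub_add_sub_cancel]
          _ ≤ ‖Ginv w - w‖ + ‖w - w₀‖ := norm_add_le _ _
          _ ≤ ε + (δ - 4 * ε) / 4 := by linarith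
      have hmem2 : Ginv w₀ ∈ closedBall w₀ (ε + (δ - 4 * ε) / 4) := by
        rw [mem_closedBall, dist_eq_norm]
        have h3 := (hkey z hz).2.2
        rw [norm_sub_rev] at h3
        linarith
      have hlip := hblip z _ hz (convex_closedBall _ _) hUreg (Ginv w₀) hmem2 (Ginv w) hmem1
      have hkey2 : Ginv w - Ginv w₀ = (w - w₀) - (b (Ginv w) - b (Ginv w₀)) := by
        have e1 : b (Ginv w) = w - Ginv w := by
          show β (Ginv w) - Ginv w = w - Ginv w
          rw [hw2]
        have e2 : b (Ginv w₀) = w₀ - Ginv w₀ := by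
          show β (Ginv w₀) - Ginv w₀ = w₀ - Ginv w₀
          rw [hβu₀]
        rw [e1, e2]; abel
      have hest : ‖Ginv w - Ginv w₀‖ ≤ ‖w - w₀‖ + k * ‖Ginv w - Ginv w₀‖ := by
        calc ‖Ginv w - Ginv w₀‖ = ‖(w - w₀) - (b (Ginv w) - b (Ginv w₀))‖ := by rw [hkey2]
          _ ≤ ‖w - w₀‖ + ‖b (Ginv w) - b (Ginv w₀)‖ := norm_sub_le _ _
          _ ≤ ‖w - w₀‖ + k * ‖Ginv w - Ginv w₀‖ := by linarith
      rw [dist_eq_norm, dist_eq_norm]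
      have h1k : 0 < 1 - k := by linarith
      rw [inv_mul_eq_div, le_div_iff₀ h1k]
      have hring : ‖Ginv w - Ginv w₀‖ * (1 - k) =
          ‖Ginv w - Ginv w₀‖ - k * ‖Ginv w - Ginv w₀‖ := by ring
      rw [hring]
      linarith [hest]
    have hGleft : ∀ᶠ w in nhds w₀, β (Ginv w) = w := by
      filter_upwards [Metric.ball_mem_nhds w₀ hr₀] with w hw
      exact (hGnear w (mem_ball.mp hw)).2.1
    have hGfd : HasFDerivAt Ginv
        (e.symm : EuclideanSpace ℂ (Fin n) →L[ℂ] EuclideanSpace ℂ (Fin n)) w₀ :=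
      HasFDerivAt.of_local_left_inverse hGcont hβfd hGleft
    have hαdiff : DifferentiableAt ℂ α z := hαd.differentiableAt (hΩo.mem_nhds (hzΩ z hz))
    have hγdiff : DifferentiableAt ℂ γ (α z) := hγd.differentiableAt (hΩo.mem_nhds (hαΩ z hz))
    exact (hGfd.differentiableAt.comp z (hγdiff.comp z hαdiff)).differentiableWithinAt
  · -- the estimate
    intro z hz
    have hαb : ‖α z - z‖ ≤ ε := (hαe z (hzΩ z hz)).le
    have hγtb : ‖Ginv (γ (α z)) - z‖ ≤ 3 * ε := by
      rw [norm_sub_rev]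
      exact (hdist3 z hz).le
    have hδ2 : 0 < δ / 2 := by linarith
    have hδ4' : 0 < δ / 4 := by linarith
    have hb1 : ‖c (α z) - c z‖ ≤ ε / (δ / 2) * ‖α z - z‖ := by
      refine norm_sub_le_of_ball hΩo hcd hcs (convex_closedBall z ε) hδ2 ?_
        (mem_closedBall_self hε.le) ?_
      · intro x hx w hw
        rw [mem_closedBall, dist_eq_norm] at hx
        rw [mem_ball, dist_eq_norm] at hw
        rw [norm_sub_rev] at hw hx
        refine hmemΩ hz ?_
        calc ‖z - w‖ = ‖(z - x) + (x - w)‖ := by rw [sub_add_sub_cancel]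
          _ ≤ ‖z - x‖ + ‖x - w‖ := norm_add_le _ _
          _ < δ := by linarith
      · rw [mem_closedBall, dist_eq_norm]
        exact hαb
    have hb2 : ‖b (Ginv (γ (α z))) - b z‖ ≤ ε / (δ / 4) * ‖Ginv (γ (α z)) - z‖ := by
      refine norm_sub_le_of_ball hΩo hbd hbs (convex_closedBall z (3 * ε)) hδ4' ?_
        (mem_closedBall_self (by linarith)) ?_
      · intro x hx w hw
        rw [mem_closedBall, dist_eq_norm] at hx
        rw [mem_ball, dist_eq_norm] at hw
        rw [norm_sub_rev] at hw hx
        refine hmemΩ hz ?_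
        calc ‖z - w‖ = ‖(z - x) + (x - w)‖ := by rw [sub_add_sub_cancel]
          _ ≤ ‖z - x‖ + ‖x - w‖ := norm_add_le _ _
          _ < δ := by linarith
      · rw [mem_closedBall, dist_eq_norm]
        exact hγtb
    have hrew : (Ginv (γ (α z)) - z) - ((γ z - z) + (α z - z) - (β z - z)) =
        (c (α z) - c z) - (b (Ginv (γ (α z))) - b z) := by
      have hβγt := (hkey z hz).2.1
      show _ = ((γ (α z) - α z) - (γ z - z)) -
        ((β (Ginv (γ (α z))) - Ginv (γ (α z))) - (β z - z))
      rw [hβγt]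
      abel
    show ‖(Ginv (γ (α z)) - z) - ((γ z - z) + (α z - z) - (β z - z))‖ ≤ 14 * ε ^ 2 / δ
    rw [hrew]
    have hc1 : 0 ≤ ε / (δ / 2) := by positivity
    have hc2 : 0 ≤ ε / (δ / 4) := by positivity
    have t1 : ‖c (α z) - c z‖ ≤ ε / (δ / 2) * ε :=
      hb1.trans (mul_le_mul_of_nonneg_left hαb hc1)
    have t2 : ‖b (Ginv (γ (α z))) - b z‖ ≤ ε / (δ / 4) * (3 * ε) :=
      hb2.trans (mul_le_mul_of_nonneg_left hγtb hc2)
    calc ‖(c (α z) - c z) - (b (Ginv (γ (α z))) - b z)‖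
        ≤ ‖c (α z) - c z‖ + ‖b (Ginv (γ (α z))) - b z‖ := norm_sub_le _ _
      _ ≤ ε / (δ / 2) * ε + ε / (δ / 4) * (3 * ε) := by linarith
      _ = 14 * ε ^ 2 / δ := by field_simp; ring
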